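/- Let e and k > 1 be positive integers. Suppose that |B ∩ S_{k-1}| ≤ 2^{dim B - 1} + 2^{k-3} for every affine subspace B of 𝔽₂^{2k-2} with dim B ∈ {e-1, e}. Then |A₁ ∩ R_{k-1}| + |A₂ ∩ S_{k-1}| ≤ 2^e + 2^{k-2} for every pair of e-dimensional affine subspaces A₁ = a₁ + W and A₂ = a₂ + W of 𝔽₂^{2k-2} that arise as translations of the same linear subspace W of 𝔽₂^{2k-2}. -/

import Mathlib

/-- The quadratic form `q_k(x) = ∑_{i=1}^k x_i · x_{k+i}` on `𝔽₂^{2k}`. -/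
def qForm (k : ℕ) (x : Fin (2 * k) → ZMod 2) : ZMod 2 :=
  ∑ i : Fin k, x ⟨i.1, by have := i.2; omega⟩ * x ⟨k + i.1, by have := i.2; omega⟩

/-- `S_k = {x ∈ 𝔽₂^{2k} : q_k(x) = 1}`. -/
def Sset (k : ℕ) : Set (Fin (2 * k) → ZMod 2) := {x | qForm k x = 1}

/-- `R_k = {x ∈ 𝔽₂^{2k} : q_k(x) = 0}`. -/
def Rset (k : ℕ) : Set (Fin (2 * k) → ZMod 2) := {x | qForm k x = 0}

/-- `A` is an affine subspace of dimension `d`: a translate `a + W` of a linear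
subspace `W` with `dim W = d`. -/
def IsAffineOfDim {V : Type*} [AddCommGroup V] [Module (ZMod 2) V]
    (A : Set V) (d : ℕ) : Prop :=
  ∃ (a : V) (W : Submodule (ZMod 2) V),
    Module.finrank (ZMod 2) W = d ∧ A = (a + ·) '' (W : Set V)

def Lfun (n : ℕ) (d x : Fin (2 * n) → ZMod 2) : ZMod 2 :=
  ∑ i : Fin n, (x ⟨i.1, by have := i.2; omega⟩ * d ⟨n + i.1, by have := i.2; omega⟩
    + d ⟨i.1, by have := i.2; omega⟩ * x ⟨n + i.1, by have := i.2; omega⟩)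

lemma qForm_add (n : ℕ) (x d : Fin (2*n) → ZMod 2) :
    qForm n (x + d) = qForm n x + Lfun n d x + qForm n d := by
  unfold qForm Lfun
  rw [← Finset.sum_add_distrib, ← Finset.sum_add_distrib]
  refine Finset.sum_congr rfl fun i _ => ?_
  simp only [Pi.add_apply]
  ring

lemma Lfun_add (n : ℕ) (d x y : Fin (2*n) → ZMod 2) :
    Lfun n d (x + y) = Lfun n d x + Lfun n d y := by
  unfold Lfun
  rw [← Finset.sum_add_distrib]
  refine Finset.sum_congr rfl fun i _ => ?_
  simp only [Pi.add_apply]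
  ring

lemma Lfun_sub (n : ℕ) (d x y : Fin (2*n) → ZMod 2) :
    Lfun n d (x - y) = Lfun n d x - Lfun n d y := by
  unfold Lfun
  rw [← Finset.sum_sub_distrib]
  refine Finset.sum_congr rfl fun i _ => ?_
  simp only [Pi.sub_apply]
  ring

lemma Lfun_zero (n : ℕ) (d : Fin (2*n) → ZMod 2) : Lfun n d 0 = 0 := by
  simp [Lfun]

def Lmap (n : ℕ) (d : Fin (2*n) → ZMod 2) :
    (Fin (2*n) → ZMod 2) →ₗ[ZMod 2] ZMod 2 where
  toFun := Lfun n d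
  map_add' x y := Lfun_add n d x y
  map_smul' c x := by
    have hc : c = 0 ∨ c = 1 := by revert c; decide
    rcases hc with rfl | rfl
    · simp [Lfun_zero]
    · simp

lemma zmod2_cases (a : ZMod 2) : a = 0 ∨ a = 1 := by revert a; decide

lemma card_coset {m : ℕ} (U : Submodule (ZMod 2) (Fin m → ZMod 2)) (b : Fin m → ZMod 2) :
    ((b + ·) '' (U : Set (Fin m → ZMod 2))).ncard = 2 ^ Module.finrank (ZMod 2) U := by
  rw [Set.ncard_image_of_injective _ (add_right_injective b), ← Nat.card_coe_set_eq]
  haveI : Fintype U := Fintype.ofFinite U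
  rw [Nat.card_eq_fintype_card]
  have := Module.card_eq_pow_finrank (K := ZMod 2) (V := U)
  simpa [ZMod.card] using this

theorem stmt_6 (e k : ℕ) (he : 0 < e) (hk : 1 < k)
    (hhyp : ∀ (B : Set (Fin (2 * (k - 1)) → ZMod 2)) (dB : ℕ),
      IsAffineOfDim B dB → (dB = e - 1 ∨ dB = e) →
      ((B ∩ Sset (k - 1)).ncard : ℝ) ≤ 2 ^ ((dB : ℤ) - 1) + 2 ^ ((k : ℤ) - 3))
    (a₁ a₂ : Fin (2 * (k - 1)) → ZMod 2)
    (W : Submodule (ZMod 2) (Fin (2 * (k - 1)) → ZMod 2))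
    (hW : Module.finrank (ZMod 2) W = e) :
    (((a₁ + ·) '' (W : Set _) ∩ Rset (k - 1)).ncard : ℝ)
        + (((a₂ + ·) '' (W : Set _) ∩ Sset (k - 1)).ncard : ℝ)
      ≤ 2 ^ (e : ℤ) + 2 ^ ((k : ℤ) - 2) := by
  set q : (Fin (2*(k-1)) → ZMod 2) → ZMod 2 := qForm (k-1) with hqdef
  set d : Fin (2*(k-1)) → ZMod 2 := a₂ - a₁ with hd
  have hda : d + a₁ = a₂ := by rw [hd]; abel
  set L : (Fin (2*(k-1)) → ZMod 2) → ZMod 2 := Lfun (k-1) d with hLdef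
  set ℓ : (Fin (2*(k-1)) → ZMod 2) → ZMod 2 := fun x => L x + q d with hldef
  have hq : ∀ x, q (d + x) = q x + ℓ x := by
    intro x
    rw [hldef, hqdef, hLdef, add_comm d x, qForm_add]
    ring
  have hlA : ∀ x w, ℓ (x + w) = ℓ x + L w := by
    intro x w
    simp only [hldef, hLdef, Lfun_add]
    ring
  set A₁ : Set (Fin (2*(k-1)) → ZMod 2) := (a₁ + ·) '' (W : Set _) with hA1
  set A₂ : Set (Fin (2*(k-1)) → ZMod 2) := (a₂ + ·) '' (W : Set _) with hA2def
  set P0 : Set (Fin (2*(k-1)) → ZMod 2) := A₁ ∩ {x | ℓ x = 0} with hP0def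
  set P1 : Set (Fin (2*(k-1)) → ZMod 2) := A₁ ∩ {x | ℓ x = 1} with hP1def
  set R : Set (Fin (2*(k-1)) → ZMod 2) := Rset (k-1) with hRdef
  set S : Set (Fin (2*(k-1)) → ZMod 2) := Sset (k-1) with hSdef
  have hqR : ∀ x, x ∈ R ↔ q x = 0 := fun x => Iff.rfl
  have hqS : ∀ x, x ∈ S ↔ q x = 1 := fun x => Iff.rfl
  have hA2 : A₂ = (d + ·) '' A₁ := by
    rw [hA2def, hA1, Set.image_image, ← hda]
    ext y
    simp only [Set.mem_image]
    constructor
    · rintro ⟨w, hw, h⟩; exact ⟨w, hw, by rw [← h, add_assoc]⟩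
    · rintro ⟨w, hw, h⟩; exact ⟨w, hw, by rw [← h, add_assoc]⟩
  -- counting identity pieces
  have hinj : Function.Injective (d + ·) := add_right_injective d
  -- (II)
  have hA2S : A₂ ∩ S = (d + ·) '' ((P0 ∩ S) ∪ (P1 ∩ R)) := by
    rw [hA2]
    ext y
    constructor
    · rintro ⟨⟨x, hx, rfl⟩, hy⟩
      rw [hqS, hq] at hy
      rcases zmod2_cases (ℓ x) with h0 | h1
      · refine ⟨x, Or.inl ⟨⟨hx, h0⟩, ?_⟩, rfl⟩
        rw [hqS]; rw [h0, add_zero] at hy; exact hy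
      · refine ⟨x, Or.inr ⟨⟨hx, h1⟩, ?_⟩, rfl⟩
        rw [hqR]
        rcases zmod2_cases (q x) with h | h
        · exact h
        · rw [h, h1] at hy; exact absurd hy (by decide)
    · rintro ⟨x, hx | hx, rfl⟩
      · rcases hx with ⟨⟨hxA, h0⟩, hxS⟩
        exact ⟨⟨x, hxA, rfl⟩, by rw [hqS, hq, h0, add_zero]; exact (hqS x).mp hxS⟩
      · rcases hx with ⟨⟨hxA, h1⟩, hxR⟩
        exact ⟨⟨x, hxA, rfl⟩, by rw [hqS, hq, h1, (hqR x).mp hxR, zero_add]⟩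
  have hdisj01 : ∀ (u v : Set (Fin (2*(k-1)) → ZMod 2)), Disjoint (P0 ∩ u) (P1 ∩ v) := by
    intro u v
    rw [Set.disjoint_left]
    rintro x ⟨⟨_, h0⟩, _⟩ ⟨⟨_, h1⟩, _⟩
    rw [Set.mem_setOf_eq] at h0 h1
    rw [h0] at h1
    exact absurd h1 (by decide)
  have hcA2S : (A₂ ∩ S).ncard = (P0 ∩ S).ncard + (P1 ∩ R).ncard := by
    rw [hA2S, Set.ncard_image_of_injective _ hinj,
      Set.ncard_union_eq (hdisj01 S R) (Set.toFinite _) (Set.toFinite _)]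
  -- (III)
  have hA1R : A₁ ∩ R = (P0 ∩ R) ∪ (P1 ∩ R) := by
    ext x
    constructor
    · rintro ⟨hxA, hxR⟩
      rcases zmod2_cases (ℓ x) with h0 | h1
      · exact Or.inl ⟨⟨hxA, h0⟩, hxR⟩
      · exact Or.inr ⟨⟨hxA, h1⟩, hxR⟩
    · rintro (⟨⟨hxA, _⟩, hxR⟩ | ⟨⟨hxA, _⟩, hxR⟩) <;> exact ⟨hxA, hxR⟩
  have hcA1R : (A₁ ∩ R).ncard = (P0 ∩ R).ncard + (P1 ∩ R).ncard := by
    rw [hA1R, Set.ncard_union_eq (hdisj01 R R) (Set.toFinite _) (Set.toFinite _)]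
  -- (IV)
  have hP0split : (P0).ncard = (P0 ∩ R).ncard + (P0 ∩ S).ncard := by
    have : P0 = (P0 ∩ R) ∪ (P0 ∩ S) := by
      ext x
      constructor
      · intro hx
        rcases zmod2_cases (q x) with h | h
        · exact Or.inl ⟨hx, (hqR x).mpr h⟩
        · exact Or.inr ⟨hx, (hqS x).mpr h⟩
      · rintro (⟨hx, _⟩ | ⟨hx, _⟩) <;> exact hx
    nth_rewrite 1 [this]
    apply Set.ncard_union_eq _ (Set.toFinite _) (Set.toFinite _)
    rw [Set.disjoint_left]
    rintro x ⟨_, hxR⟩ ⟨_, hxS⟩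
    rw [hqR] at hxR; rw [hqS] at hxS
    rw [hxR] at hxS
    exact absurd hxS (by decide)
  -- (V)
  have hP1R : (P1 ∩ R).ncard = ((d + ·) '' P1 ∩ S).ncard := by
    have himg : (d + ·) '' P1 ∩ S = (d + ·) '' (P1 ∩ R) := by
      ext y
      constructor
      · rintro ⟨⟨x, hx, rfl⟩, hy⟩
        refine ⟨x, ⟨hx, ?_⟩, rfl⟩
        rw [hqS, hq, hx.2] at hy
        rw [hqR]
        rcases zmod2_cases (q x) with h | h
        · exact h
        · rw [h] at hy; exact absurd hy (by decide)
      · rintro ⟨x, ⟨hx, hxR⟩, rfl⟩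
        exact ⟨⟨x, hx, rfl⟩, by rw [hqS, hq, hx.2, (hqR x).mp hxR, zero_add]⟩
    rw [himg, Set.ncard_image_of_injective _ hinj]
  -- main identity (natural numbers)
  have hsum : (A₁ ∩ R).ncard + (A₂ ∩ S).ncard
      = P0.ncard + 2 * ((d + ·) '' P1 ∩ S).ncard := by
    rw [hcA1R, hcA2S, hP0split, ← hP1R]
    ring

  have hgoal : ((A₁ ∩ R).ncard : ℝ) + ((A₂ ∩ S).ncard : ℝ)
      = (P0.ncard : ℝ) + 2 * (((d + ·) '' P1 ∩ S).ncard : ℝ) := by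
    exact_mod_cast congrArg (Nat.cast : ℕ → ℝ) hsum
  rw [hgoal]
  have hdbl : ∀ m : ℤ, 2 * (2:ℝ) ^ (m - 1) = 2 ^ m := by
    intro m
    rw [mul_comm, ← zpow_add_one₀ (two_ne_zero (α := ℝ))]
    congr 1
    ring
  by_cases hL : ∀ w ∈ W, L w = 0
  · -- ℓ is constant on A₁
    rcases zmod2_cases (ℓ a₁) with hc | hc
    · -- P1 empty
      have hP1e : P1 = ∅ := by
        rw [hP1def, Set.eq_empty_iff_forall_notMem]
        rintro x ⟨⟨w, hw, rfl⟩, hx1⟩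
        rw [Set.mem_setOf_eq, hlA, hc, hL w hw, add_zero] at hx1
        exact absurd hx1 (by decide)
      have hP0le : (P0.ncard : ℝ) ≤ 2 ^ (e : ℤ) := by
        have h1 : P0.ncard ≤ A₁.ncard := Set.ncard_le_ncard Set.inter_subset_left (Set.toFinite _)
        have h2' : A₁.ncard = 2 ^ e := by rw [hA1, card_coset, hW]
        have h3 : (P0.ncard : ℝ) ≤ ((2 ^ e : ℕ) : ℝ) := by exact_mod_cast h2' ▸ h1
        rw [zpow_natCast]
        push_cast at h3
        exact h3
      rw [hP1e]
      simp only [Set.image_empty, Set.empty_inter, Set.ncard_empty, Nat.cast_zero, mul_zero,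
        add_zero]
      have : (0:ℝ) < 2 ^ ((k:ℤ) - 2) := zpow_pos two_pos _
      linarith
    · -- P0 empty, P1 = A₁
      have hP0e : P0 = ∅ := by
        rw [hP0def, Set.eq_empty_iff_forall_notMem]
        rintro x ⟨⟨w, hw, rfl⟩, hx0⟩
        rw [Set.mem_setOf_eq, hlA, hc, hL w hw, add_zero] at hx0
        exact absurd hx0 (by decide)
      have hP1a : P1 = A₁ := by
        rw [hP1def]
        apply Set.inter_eq_left.mpr
        rintro x ⟨w, hw, rfl⟩
        rw [Set.mem_setOf_eq, hlA, hc, hL w hw, add_zero]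
      have himg : (d + ·) '' P1 = A₂ := by rw [hP1a, hA2]
      have hb := hhyp A₂ e ⟨a₂, W, hW, hA2def⟩ (Or.inr rfl)
      rw [hP0e, himg]
      simp only [Set.ncard_empty, Nat.cast_zero, zero_add]
      have he1 : (2:ℝ) ^ (e:ℤ) = 2 * 2 ^ ((e:ℤ) - 1) := (hdbl _).symm
      have hk1 : (2:ℝ) ^ ((k:ℤ) - 2) = 2 * 2 ^ ((k:ℤ) - 3) := by
        have := hdbl ((k:ℤ) - 2)
        rw [show (k:ℤ) - 2 - 1 = (k:ℤ) - 3 from by ring] at this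
        exact this.symm
      rw [he1, hk1]
      linarith
  · -- L not identically zero on W
    push_neg at hL
    obtain ⟨w₀, hw₀W, hw₀⟩ := hL
    have hw₀1 : L w₀ = 1 := (zmod2_cases (L w₀)).resolve_left hw₀
    set f : W →ₗ[ZMod 2] ZMod 2 := (Lmap (k-1) d).comp W.subtype with hf
    have hfval : ∀ y : W, f y = L y := fun y => rfl
    have hrange : LinearMap.range f = ⊤ := by
      rw [Submodule.eq_top_iff']
      intro x
      have h1 : (1 : ZMod 2) ∈ LinearMap.range f := ⟨⟨w₀, hw₀W⟩, hw₀1⟩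
      have := Submodule.smul_mem (LinearMap.range f) x h1
      simpa using this
    have hker : Module.finrank (ZMod 2) (LinearMap.ker f) = e - 1 := by
      have hrn := LinearMap.finrank_range_add_finrank_ker f
      rw [hrange, finrank_top, hW] at hrn
      have : Module.finrank (ZMod 2) (ZMod 2) = 1 := Module.finrank_self _
      omega
    set W' : Submodule (ZMod 2) (Fin (2*(k-1)) → ZMod 2) :=
      Submodule.map W.subtype (LinearMap.ker f) with hW'def
    have hW' : Module.finrank (ZMod 2) W' = e - 1 := by
      rw [hW'def, Submodule.finrank_map_subtype_eq]
      exact hker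
    have hmemW' : ∀ x, x ∈ W' ↔ x ∈ W ∧ L x = 0 := by
      intro x
      constructor
      · rintro ⟨⟨y, hyW⟩, hy, rfl⟩
        exact ⟨hyW, hy⟩
      · rintro ⟨hxW, hx0⟩
        exact ⟨⟨x, hxW⟩, hx0, rfl⟩
    -- choose coset representatives
    set w₁ : Fin (2*(k-1)) → ZMod 2 := if ℓ a₁ = 0 then w₀ else 0 with hw₁def
    set w₂ : Fin (2*(k-1)) → ZMod 2 := if ℓ a₁ = 0 then 0 else w₀ with hw₂def
    have hw₁W : w₁ ∈ W := by rw [hw₁def]; split <;> simp [hw₀W]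
    have hw₂W : w₂ ∈ W := by rw [hw₂def]; split <;> simp [hw₀W]
    have hl₁ : ℓ (a₁ + w₁) = 1 := by
      rw [hlA, hw₁def]
      rcases zmod2_cases (ℓ a₁) with hc | hc
      · rw [if_pos hc, hc, hw₀1, zero_add]
      · rw [if_neg (by rw [hc]; decide), hc]
        simp only [hLdef, Lfun_zero, add_zero]
    have hl₂ : ℓ (a₁ + w₂) = 0 := by
      rw [hlA, hw₂def]
      rcases zmod2_cases (ℓ a₁) with hc | hc
      · rw [if_pos hc, hc]
        simp only [hLdef, Lfun_zero, add_zero]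
      · rw [if_neg (by rw [hc]; decide), hc, hw₀1]
        decide
    -- coset descriptions
    have hcoset : ∀ (b : Fin (2*(k-1)) → ZMod 2) (v : ZMod 2), b ∈ A₁ → ℓ b = v →
        A₁ ∩ {x | ℓ x = v} = (b + ·) '' (W' : Set _) := by
      rintro b v ⟨wb, hwb, rfl⟩ hlb
      ext x
      constructor
      · rintro ⟨⟨w, hw, rfl⟩, hx⟩
        rw [Set.mem_setOf_eq] at hx
        refine ⟨w - wb, ?_, by show a₁ + wb + (w - wb) = a₁ + w; rw [add_assoc, add_sub_cancel]⟩
        rw [SetLike.mem_coe, hmemW']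
        refine ⟨sub_mem hw hwb, ?_⟩
        have h1 : ℓ a₁ + L w = v := by rw [← hlA]; exact hx
        have h2 : ℓ a₁ + L wb = v := by rw [← hlA]; exact hlb
        have : L (w - wb) = L w - L wb := Lfun_sub (k-1) d w wb
        rw [this]
        have : L w = L wb := by
          have := h1.trans h2.symm
          exact add_left_cancel this
        rw [this, sub_self]
      · rintro ⟨u, hu, rfl⟩
        rw [SetLike.mem_coe, hmemW'] at hu
        constructor
        · exact ⟨wb + u, add_mem hwb hu.1, by show a₁ + (wb + u) = a₁ + wb + u; rw [add_assoc]⟩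
        · rw [Set.mem_setOf_eq]
          rw [hlA, hu.2, add_zero, hlb]
    have hP0c : P0 = ((a₁ + w₂) + ·) '' (W' : Set _) :=
      hcoset (a₁ + w₂) 0 ⟨w₂, hw₂W, rfl⟩ hl₂
    have hP1c : P1 = ((a₁ + w₁) + ·) '' (W' : Set _) :=
      hcoset (a₁ + w₁) 1 ⟨w₁, hw₁W, rfl⟩ hl₁
    have hcP0 : P0.ncard = 2 ^ (e - 1) := by rw [hP0c, card_coset, hW']
    have himgP1 : (d + ·) '' P1 = ((d + (a₁ + w₁)) + ·) '' (W' : Set _) := by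
      rw [hP1c, Set.image_image]
      ext y
      simp only [Set.mem_image]
      constructor
      · rintro ⟨w, hw, h⟩; exact ⟨w, hw, by rw [← h]; abel⟩
      · rintro ⟨w, hw, h⟩; exact ⟨w, hw, by rw [← h]; abel⟩
    have haff : IsAffineOfDim ((d + ·) '' P1) (e - 1) := ⟨d + (a₁ + w₁), W', hW', himgP1⟩
    have hb := hhyp _ (e - 1) haff (Or.inl rfl)
    have hcast1 : ((e - 1 : ℕ) : ℤ) = (e : ℤ) - 1 := by omega
    rw [hcast1] at hb
    have hE2 : (e : ℤ) - 1 - 1 = (e : ℤ) - 2 := by ring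
    rw [hE2] at hb
    have hP0r : (P0.ncard : ℝ) = 2 ^ ((e : ℤ) - 1) := by
      rw [hcP0]
      push_cast
      rw [← zpow_natCast (2:ℝ) (e - 1), hcast1]
    rw [hP0r]
    have he1 : (2:ℝ) ^ (e:ℤ) = 2 * 2 ^ ((e:ℤ) - 1) := (hdbl _).symm
    have he2 : (2:ℝ) ^ ((e:ℤ) - 1) = 2 * 2 ^ ((e:ℤ) - 2) := by
      have := hdbl ((e:ℤ) - 1)
      rw [show (e:ℤ) - 1 - 1 = (e:ℤ) - 2 from by ring] at this
      exact this.symm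
    have hk1 : (2:ℝ) ^ ((k:ℤ) - 2) = 2 * 2 ^ ((k:ℤ) - 3) := by
      have := hdbl ((k:ℤ) - 2)
      rw [show (k:ℤ) - 2 - 1 = (k:ℤ) - 3 from by ring] at this
      exact this.symm
    linarith
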